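/- Assume k ≥ 2. If the clique-kernel ck(Sp) = ker(Rᵀ) ∩ range((I − J)⁻¹·R) is not the zero subspace, then its dimension equals exactly 1. In particular, dim ck(Sp) ≤ 1 always. -/

import Mathlib

open Matrix

/-- For `k ≥ 2`, if the clique-kernel
`ck(Sp) = ker(Rᵀ) ∩ range((I - J)⁻¹ R)` is not the zero subspace then its
dimension is exactly `1`; in particular `dim ck(Sp) ≤ 1` always. -/
theorem stmt_16 (k s : ℕ) (hk : 2 ≤ k)
    (R : Matrix (Fin k) (Fin s) ℝ) (hR01 : ∀ i j, R i j = 0 ∨ R i j = 1)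
    (J : Matrix (Fin k) (Fin k) ℝ) (hJ : ∀ i j, J i j = 1)
    (ck : Submodule ℝ (Fin k → ℝ))
    (hck : ck = LinearMap.ker (Matrix.mulVecLin Rᵀ) ⊓
      LinearMap.range (Matrix.mulVecLin ((1 - J)⁻¹ * R))) :
    (ck ≠ ⊥ → Module.finrank ℝ ck = 1) ∧ Module.finrank ℝ ck ≤ 1 := by
  have hkk : (1 - (k:ℝ)) ≠ 0 := by
    have : (2:ℝ) ≤ (k:ℝ) := by exact_mod_cast hk
    linarith
  set c : ℝ := (1 - (k:ℝ))⁻¹ with hc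
  have hc1 : c * (1 - (k:ℝ)) = 1 := inv_mul_cancel₀ hkk
  set B : Matrix (Fin k) (Fin k) ℝ := 1 + c • J with hB
  have hJJ : J * J = (k:ℝ) • J := by
    ext i j
    simp [Matrix.mul_apply, hJ]
  have hBinv : (1 - J) * B = 1 := by
    rw [hB]
    rw [sub_mul, mul_add, mul_add, one_mul, one_mul, mul_one, Matrix.mul_smul, hJJ]
    have : c • ((k:ℝ) • J) = (c * k) • J := by rw [smul_smul]
    rw [this]
    have hcoef : c • J - (J + (c * k) • J) = (c * (1 - (k:ℝ)) - 1) • J := by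
      module
    rw [add_sub_assoc, hcoef, hc1, sub_self, zero_smul, add_zero]
  have hinv_eq : (1 - J)⁻¹ = B := Matrix.inv_eq_right_inv hBinv
  have hmul : (1 - J) * (1 - J)⁻¹ = 1 := by rw [hinv_eq]; exact hBinv
  -- key: any x in ck with zero coordinate sum is zero
  have key : ∀ x ∈ ck, (∑ i, x i) = 0 → x = 0 := by
    intro x hx hsum
    rw [hck] at hx
    obtain ⟨hker, y, hy⟩ := hx
    have hker' : Rᵀ.mulVec x = 0 := hker
    have hy' : ((1 - J)⁻¹ * R).mulVec y = x := hy
    have h1 : (1 - J).mulVec x = R.mulVec y := by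
      rw [← hy', Matrix.mulVec_mulVec, ← Matrix.mul_assoc, hmul, Matrix.one_mul]
    have h2 : x ⬝ᵥ (1 - J).mulVec x = 0 := by
      rw [h1, Matrix.dotProduct_mulVec, ← Matrix.mulVec_transpose, hker',
        zero_dotProduct]
    have h3 : x ⬝ᵥ J.mulVec x = 0 := by
      simp only [dotProduct, Matrix.mulVec, dotProduct, hJ, one_mul]
      rw [← Finset.sum_mul, hsum, zero_mul]
    have h4 : x ⬝ᵥ x = 0 := by
      have := h2
      rw [Matrix.sub_mulVec, dotProduct_sub, Matrix.one_mulVec, h3, sub_zero] at this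
      exact this
    have h5 : ∀ i, x i = 0 := by
      intro i
      have hnn : ∀ j ∈ Finset.univ, (0:ℝ) ≤ x j * x j := fun j _ => mul_self_nonneg _
      have := (Finset.sum_eq_zero_iff_of_nonneg hnn).mp h4 i (Finset.mem_univ i)
      exact mul_self_eq_zero.mp this
    funext i; exact h5 i
  -- the sum functional
  let g : (Fin k → ℝ) →ₗ[ℝ] ℝ :=
    { toFun := fun x => ∑ i, x i
      map_add' := fun x y => by simp [Finset.sum_add_distrib]
      map_smul' := fun r x => by simp [Finset.mul_sum] }
  have hinj : Function.Injective (g.comp ck.subtype) := by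
    rw [← LinearMap.ker_eq_bot]
    rw [Submodule.eq_bot_iff]
    intro v hv
    have hsum : (∑ i, (v : Fin k → ℝ) i) = 0 := hv
    have := key (v : Fin k → ℝ) v.2 hsum
    exact Subtype.ext this
  have hle : Module.finrank ℝ ck ≤ 1 := by
    have := LinearMap.finrank_le_finrank_of_injective hinj
    simpa using this
  refine ⟨fun hne => ?_, hle⟩
  have hpos : 0 < Module.finrank ℝ ck := by
    rw [Module.finrank_pos_iff]
    exact Submodule.nontrivial_iff_ne_bot.mpr hne
  omega
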